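/- Suppose (r, r′) ∈ ℂ² \ L. Then the ℂ-vector space of diagonal families for (r, r′) is one-dimensional, and every nonzero diagonal family s satisfies: (a) if r ∉ −ρ−2ℕ and r′ ∉ −ρ′−2ℕ, then s(q₁, q₂) ≠ 0 for all q₁, q₂ ∈ ℕ; (b) if r = −ρ−2i with i ∈ ℕ and r′ ∉ −ρ′−2ℕ, then s(q₁, q₂) = 0 whenever q₁ ≤ i or q₂ ≤ i, and s(q₁, q₂) ≠ 0 whenever q₁ > i and q₂ > i; (c) if r ∉ −ρ−2ℕ and r′ = −ρ′−2j with j ∈ ℕ, then s(q₁, q₂) ≠ 0 whenever q₁ ≤ j and q₂ ≤ j, and s(q₁, q₂) = 0 whenever q₁ > j or q₂ > j; (d) if r = −ρ−2i and r′ = −ρ′−2j with i, j ∈ ℕ and i < j, then s(q₁, q₂) ≠ 0 whenever i < q₁ ≤ j and i < q₂ ≤ j, and s(q₁, q₂) = 0 otherwise. -/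
import Mathlib


noncomputable section

/-- A diagonal family for `(r, r')` (case of unitary groups, ρ = n, ρ' = n−1):
(D1): `(r'+2q₁+n−1)·s(q₁,q₂) = (r+2q₁+n)·s(q₁+1,q₂)` and
(D2): `(r'+2q₂+n−1)·s(q₁,q₂) = (r+2q₂+n)·s(q₁,q₂+1)` for all `q₁, q₂ ∈ ℕ`. -/
def IsDiagFam (n : ℕ) (r r' : ℂ) (s : ℕ → ℕ → ℂ) : Prop :=
  ∀ q₁ q₂ : ℕ,
    (r' + 2*(q₁ : ℂ) + (n : ℂ) - 1) * s q₁ q₂ = (r + 2*(q₁ : ℂ) + (n : ℂ)) * s (q₁ + 1) q₂ ∧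
    (r' + 2*(q₂ : ℂ) + (n : ℂ) - 1) * s q₁ q₂ = (r + 2*(q₂ : ℂ) + (n : ℂ)) * s q₁ (q₂ + 1)

/-- The ℂ-vector space of diagonal families for `(r, r')`. -/
def diagFamSub (n : ℕ) (r r' : ℂ) : Submodule ℂ (ℕ → ℕ → ℂ) where
  carrier := {s | IsDiagFam n r r' s}
  add_mem' := by
    intro a b ha hb q₁ q₂
    constructor
    · simp only [Pi.add_apply]
      linear_combination (ha q₁ q₂).1 + (hb q₁ q₂).1
    · simp only [Pi.add_apply]
      linear_combination (ha q₁ q₂).2 + (hb q₁ q₂).2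
  zero_mem' := by
    intro q₁ q₂
    constructor <;> simp
  smul_mem' := by
    intro c s hs q₁ q₂
    constructor
    · simp only [Pi.smul_apply, smul_eq_mul]
      linear_combination c * (hs q₁ q₂).1
    · simp only [Pi.smul_apply, smul_eq_mul]
      linear_combination c * (hs q₁ q₂).2

/-- L = {(−ρ−2i, −ρ′−2j) : i, j ∈ ℕ, j ≤ i}, with ρ = n, ρ' = n−1. -/
def LC (n : ℕ) : Set (ℂ × ℂ) :=
  {p | ∃ i j : ℕ, j ≤ i ∧ p.1 = -(n : ℂ) - 2*(i : ℂ) ∧ p.2 = -((n : ℂ) - 1) - 2*(j : ℂ)}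



namespace St13

open Classical in
noncomputable def fF (n : ℕ) (r r' : ℂ) : ℕ → ℂ
  | 0 => if ∃ i : ℕ, r = -(n : ℂ) - 2*(i : ℂ) then 0 else 1
  | (q+1) => if r + 2*(q : ℂ) + (n : ℂ) = 0 then 1
      else (r' + 2*(q : ℂ) + (n : ℂ) - 1) * fF n r r' q / (r + 2*(q : ℂ) + (n : ℂ))

variable {n : ℕ} {r r' : ℂ}

lemma A_ne {i q : ℕ} (hi : r = -(n : ℂ) - 2*(i : ℂ)) (h : q ≠ i) :
    r + 2*(q : ℂ) + (n : ℂ) ≠ 0 := by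
  intro h0
  apply h
  have : (q : ℂ) = (i : ℂ) := by linear_combination h0/2 - hi/2
  exact_mod_cast this

lemma B_ne {j q : ℕ} (hj : r' = -((n : ℂ) - 1) - 2*(j : ℂ)) (h : q ≠ j) :
    r' + 2*(q : ℂ) + (n : ℂ) - 1 ≠ 0 := by
  intro h0
  apply h
  have : (q : ℂ) = (j : ℂ) := by linear_combination h0/2 - hj/2
  exact_mod_cast this

lemma A_ne' (h : ¬∃ i : ℕ, r = -(n : ℂ) - 2*(i : ℂ)) (q : ℕ) :
    r + 2*(q : ℂ) + (n : ℂ) ≠ 0 :=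
  fun h0 => h ⟨q, by linear_combination h0⟩

lemma B_ne' (h : ¬∃ j : ℕ, r' = -((n : ℂ) - 1) - 2*(j : ℂ)) (q : ℕ) :
    r' + 2*(q : ℂ) + (n : ℂ) - 1 ≠ 0 :=
  fun h0 => h ⟨q, by linear_combination h0⟩

lemma A_zero {i : ℕ} (hi : r = -(n : ℂ) - 2*(i : ℂ)) : r + 2*(i : ℂ) + (n : ℂ) = 0 := by
  rw [hi]; ring

lemma B_zero {j : ℕ} (hj : r' = -((n : ℂ) - 1) - 2*(j : ℂ)) :
    r' + 2*(j : ℂ) + (n : ℂ) - 1 = 0 := by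
  rw [hj]; ring

lemma f_step (q : ℕ) (hA : r + 2*(q : ℂ) + (n : ℂ) ≠ 0) :
    fF n r r' (q+1) = (r' + 2*(q : ℂ) + (n : ℂ) - 1) * fF n r r' q / (r + 2*(q : ℂ) + (n : ℂ)) := by
  simp only [fF, if_neg hA]

lemma f_base_ex {i : ℕ} (hi : r = -(n : ℂ) - 2*(i : ℂ)) : fF n r r' (i+1) = 1 := by
  simp only [fF, if_pos (A_zero hi)]

lemma f_base_nex (h : ¬∃ i : ℕ, r = -(n : ℂ) - 2*(i : ℂ)) : fF n r r' 0 = 1 := by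
  simp only [fF, if_neg h]

lemma fz {i : ℕ} (hi : r = -(n : ℂ) - 2*(i : ℂ)) : ∀ q ≤ i, fF n r r' q = 0 := by
  intro q
  induction q with
  | zero =>
    intro _
    have : ∃ i : ℕ, r = -(n : ℂ) - 2*(i : ℂ) := ⟨i, hi⟩
    simp only [fF, if_pos this]
  | succ q ih =>
    intro hq
    have hqi : q ≠ i := by omega
    rw [f_step q (A_ne hi hqi), ih (by omega)]
    simp

lemma f_rec (q : ℕ) :
    (r' + 2*(q : ℂ) + (n : ℂ) - 1) * fF n r r' q
      = (r + 2*(q : ℂ) + (n : ℂ)) * fF n r r' (q+1) := by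
  by_cases hA : r + 2*(q : ℂ) + (n : ℂ) = 0
  · have hi : r = -(n : ℂ) - 2*(q : ℂ) := by linear_combination hA
    rw [fz hi q le_rfl, hA]
    ring
  · rw [f_step q hA]
    field_simp


lemma f_ne_a (hr : ¬∃ i : ℕ, r = -(n : ℂ) - 2*(i : ℂ))
    (hr' : ¬∃ j : ℕ, r' = -((n : ℂ) - 1) - 2*(j : ℂ)) :
    ∀ q, fF n r r' q ≠ 0 := by
  intro q
  induction q with
  | zero => rw [f_base_nex hr]; exact one_ne_zero
  | succ q ih =>
    rw [f_step q (A_ne' hr q)]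
    exact div_ne_zero (mul_ne_zero (B_ne' hr' q) ih) (A_ne' hr q)

lemma f_iff_b {i : ℕ} (hi : r = -(n : ℂ) - 2*(i : ℂ))
    (hr' : ¬∃ j : ℕ, r' = -((n : ℂ) - 1) - 2*(j : ℂ)) :
    ∀ q, fF n r r' q ≠ 0 ↔ i < q := by
  intro q
  induction q with
  | zero => exact iff_of_false (fun hc => hc (fz hi 0 (Nat.zero_le i))) (by omega)
  | succ q ih =>
    rcases lt_trichotomy q i with h | h | h
    · exact iff_of_false (fun hc => hc (fz hi (q+1) (by omega))) (by omega)
    · subst h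
      rw [f_base_ex hi]
      exact iff_of_true one_ne_zero (by omega)
    · have hA := A_ne hi (by omega : q ≠ i)
      refine iff_of_true ?_ (by omega)
      rw [f_step q hA]
      exact div_ne_zero (mul_ne_zero (B_ne' hr' q) (ih.2 h)) hA

lemma f_iff_c {j : ℕ} (hr : ¬∃ i : ℕ, r = -(n : ℂ) - 2*(i : ℂ))
    (hj : r' = -((n : ℂ) - 1) - 2*(j : ℂ)) :
    ∀ q, fF n r r' q ≠ 0 ↔ q ≤ j := by
  intro q
  induction q with
  | zero => exact iff_of_true (by rw [f_base_nex hr]; exact one_ne_zero) (Nat.zero_le j)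
  | succ q ih =>
    have hA := A_ne' hr q
    rcases lt_trichotomy q j with h | h | h
    · refine iff_of_true ?_ (by omega)
      rw [f_step q hA]
      exact div_ne_zero (mul_ne_zero (B_ne hj (by omega : q ≠ j)) (ih.2 (by omega))) hA
    · subst h
      refine iff_of_false (fun hc => hc ?_) (by omega)
      rw [f_step q hA, B_zero hj]
      simp
    · refine iff_of_false (fun hc => hc ?_) (by omega)
      have hz : fF n r r' q = 0 := by
        by_contra hc2; exact absurd (ih.1 hc2) (by omega)
      rw [f_step q hA, hz]
      simp

lemma f_iff_d {i j : ℕ} (hi : r = -(n : ℂ) - 2*(i : ℂ))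
    (hj : r' = -((n : ℂ) - 1) - 2*(j : ℂ)) (hij : i < j) :
    ∀ q, fF n r r' q ≠ 0 ↔ (i < q ∧ q ≤ j) := by
  intro q
  induction q with
  | zero => exact iff_of_false (fun hc => hc (fz hi 0 (Nat.zero_le i))) (by omega)
  | succ q ih =>
    rcases lt_trichotomy q i with h | h | h
    · exact iff_of_false (fun hc => hc (fz hi (q+1) (by omega))) (by omega)
    · subst h
      rw [f_base_ex hi]
      exact iff_of_true one_ne_zero (by omega)
    · have hA := A_ne hi (by omega : q ≠ i)
      rcases lt_trichotomy q j with h2 | h2 | h2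
      · refine iff_of_true ?_ (by omega)
        rw [f_step q hA]
        exact div_ne_zero (mul_ne_zero (B_ne hj (by omega : q ≠ j)) (ih.2 ⟨h, by omega⟩)) hA
      · subst h2
        refine iff_of_false (fun hc => hc ?_) (by omega)
        rw [f_step q hA, B_zero hj]
        simp
      · refine iff_of_false (fun hc => hc ?_) (by omega)
        have hz : fF n r r' q = 0 := by
          by_contra hc2; exact absurd (ih.1 hc2).2 (by omega)
        rw [f_step q hA, hz]
        simp


open Classical in
noncomputable def pF (n : ℕ) (r : ℂ) : ℕ :=
  if h : ∃ i : ℕ, r = -(n : ℂ) - 2*(i : ℂ) then h.choose + 1 else 0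

lemma A_uniq {i i' : ℕ} (h : r = -(n : ℂ) - 2*(i : ℂ)) (h' : r = -(n : ℂ) - 2*(i' : ℂ)) :
    i = i' := by
  have : (i : ℂ) = (i' : ℂ) := by linear_combination h/2 - h'/2
  exact_mod_cast this

lemma f_pF : fF n r r' (pF n r) = 1 := by
  unfold pF
  split
  · next h => exact f_base_ex h.choose_spec
  · next h => exact f_base_nex h

/-- 1-D uniqueness: any solution of the recursion is `t (pF) • fF`. -/
lemma uniq (hij : ∀ i j : ℕ, r = -(n : ℂ) - 2*(i : ℂ) → r' = -((n : ℂ) - 1) - 2*(j : ℂ) → i < j)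
    (t : ℕ → ℂ)
    (ht : ∀ q : ℕ, (r' + 2*(q : ℂ) + (n : ℂ) - 1) * t q = (r + 2*(q : ℂ) + (n : ℂ)) * t (q+1)) :
    ∀ q, t q = t (pF n r) * fF n r r' q := by
  by_cases hex : ∃ i : ℕ, r = -(n : ℂ) - 2*(i : ℂ)
  · obtain ⟨i, hi⟩ := hex
    have hp : pF n r = i + 1 := by
      unfold pF
      split
      · next h => rw [A_uniq h.choose_spec hi]
      · next h => exact absurd ⟨i, hi⟩ h
    rw [hp]
    -- B q ≠ 0 for q ≤ i
    have hB : ∀ q : ℕ, q ≤ i → r' + 2*(q : ℂ) + (n : ℂ) - 1 ≠ 0 := by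
      intro q hq h0
      have hj : r' = -((n : ℂ) - 1) - 2*(q : ℂ) := by linear_combination h0
      exact absurd (hij i q hi hj) (by omega)
    -- downward vanishing
    have hdown : ∀ d : ℕ, t (i - d) = 0 := by
      intro d
      induction d with
      | zero =>
        simp only [Nat.sub_zero]
        have := ht i
        rw [A_zero hi, zero_mul] at this
        exact (mul_eq_zero.mp this).resolve_left (hB i le_rfl)
      | succ d ihd =>
        rcases le_or_gt i d with h | h
        · rw [(by omega : i - (d+1) = i - d)]; exact ihd
        · set q := i - (d+1) with hq
          have hq1 : q + 1 = i - d := by omega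
          have := ht q
          rw [hq1, ihd, mul_zero] at this
          exact (mul_eq_zero.mp this).resolve_left (hB q (by omega))
    have hzero : ∀ q ≤ i, t q = 0 := by
      intro q hq
      have : q = i - (i - q) := by omega
      rw [this]; exact hdown (i - q)
    intro q
    induction q with
    | zero =>
      rw [hzero 0 (Nat.zero_le i), fz hi 0 (Nat.zero_le i), mul_zero]
    | succ q ihq =>
      rcases lt_trichotomy q i with h | h | h
      · rw [hzero (q+1) (by omega), fz hi (q+1) (by omega), mul_zero]
      · subst h
        rw [f_base_ex hi, mul_one]
      · have hA := A_ne hi (by omega : q ≠ i)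
        apply mul_left_cancel₀ hA
        calc (r + 2*(q:ℂ) + n) * t (q+1)
            = (r' + 2*(q:ℂ) + n - 1) * t q := (ht q).symm
          _ = (r' + 2*(q:ℂ) + n - 1) * (t (i+1) * fF n r r' q) := by rw [ihq]
          _ = t (i+1) * ((r' + 2*(q:ℂ) + n - 1) * fF n r r' q) := by ring
          _ = t (i+1) * ((r + 2*(q:ℂ) + n) * fF n r r' (q+1)) := by rw [f_rec]
          _ = (r + 2*(q:ℂ) + n) * (t (i+1) * fF n r r' (q+1)) := by ring
  · have hp : pF n r = 0 := dif_neg hex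
    rw [hp]
    intro q
    induction q with
    | zero => rw [f_base_nex hex, mul_one]
    | succ q ihq =>
      have hA := A_ne' hex q
      apply mul_left_cancel₀ hA
      calc (r + 2*(q:ℂ) + n) * t (q+1)
          = (r' + 2*(q:ℂ) + n - 1) * t q := (ht q).symm
        _ = (r' + 2*(q:ℂ) + n - 1) * (t 0 * fF n r r' q) := by rw [ihq]
        _ = t 0 * ((r' + 2*(q:ℂ) + n - 1) * fF n r r' q) := by ring
        _ = t 0 * ((r + 2*(q:ℂ) + n) * fF n r r' (q+1)) := by rw [f_rec]
        _ = (r + 2*(q:ℂ) + n) * (t 0 * fF n r r' (q+1)) := by ring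


end St13


namespace St13
variable {n : ℕ} {r r' : ℂ}


lemma rep (hij : ∀ i j : ℕ, r = -(n : ℂ) - 2*(i : ℂ) → r' = -((n : ℂ) - 1) - 2*(j : ℂ) → i < j)
    {s : ℕ → ℕ → ℂ} (hs : IsDiagFam n r r' s) (q₁ q₂ : ℕ) :
    s q₁ q₂ = s (pF n r) (pF n r) * (fF n r r' q₁ * fF n r r' q₂) := by
  have h1 : s q₁ q₂ = s (pF n r) q₂ * fF n r r' q₁ :=
    uniq hij (fun q => s q q₂) (fun q => (hs q q₂).1) q₁
  have h2 : s (pF n r) q₂ = s (pF n r) (pF n r) * fF n r r' q₂ :=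
    uniq hij (fun q => s (pF n r) q) (fun q => (hs (pF n r) q).2) q₂
  rw [h1, h2]; ring

lemma s0_mem : IsDiagFam n r r' (fun q₁ q₂ => fF n r r' q₁ * fF n r r' q₂) := by
  intro q₁ q₂
  constructor
  · linear_combination fF n r r' q₂ * f_rec (n := n) (r := r) (r' := r') q₁
  · linear_combination fF n r r' q₁ * f_rec (n := n) (r := r) (r' := r') q₂

end St13

theorem statement13 (n : ℕ) (hn : 2 ≤ n) (r r' : ℂ) (hL : (r, r') ∉ LC n) :
    Module.finrank ℂ (diagFamSub n r r') = 1 ∧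
    ∀ s : ℕ → ℕ → ℂ, IsDiagFam n r r' s → s ≠ 0 →
      ((r ∉ Set.range (fun i : ℕ => -(n : ℂ) - 2*(i : ℂ)) →
        r' ∉ Set.range (fun j : ℕ => -((n : ℂ) - 1) - 2*(j : ℂ)) →
        ∀ q₁ q₂ : ℕ, s q₁ q₂ ≠ 0) ∧
       (∀ i : ℕ, r = -(n : ℂ) - 2*(i : ℂ) →
        r' ∉ Set.range (fun j : ℕ => -((n : ℂ) - 1) - 2*(j : ℂ)) →
        (∀ q₁ q₂ : ℕ, (q₁ ≤ i ∨ q₂ ≤ i) → s q₁ q₂ = 0) ∧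
        (∀ q₁ q₂ : ℕ, i < q₁ → i < q₂ → s q₁ q₂ ≠ 0)) ∧
       (r ∉ Set.range (fun i : ℕ => -(n : ℂ) - 2*(i : ℂ)) →
        ∀ j : ℕ, r' = -((n : ℂ) - 1) - 2*(j : ℂ) →
        (∀ q₁ q₂ : ℕ, q₁ ≤ j → q₂ ≤ j → s q₁ q₂ ≠ 0) ∧
        (∀ q₁ q₂ : ℕ, (j < q₁ ∨ j < q₂) → s q₁ q₂ = 0)) ∧
       (∀ i j : ℕ, r = -(n : ℂ) - 2*(i : ℂ) → r' = -((n : ℂ) - 1) - 2*(j : ℂ) → i < j →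
        (∀ q₁ q₂ : ℕ, i < q₁ → q₁ ≤ j → i < q₂ → q₂ ≤ j → s q₁ q₂ ≠ 0) ∧
        (∀ q₁ q₂ : ℕ, ¬(i < q₁ ∧ q₁ ≤ j ∧ i < q₂ ∧ q₂ ≤ j) → s q₁ q₂ = 0))) := by
  have hij : ∀ i j : ℕ, r = -(n : ℂ) - 2*(i : ℂ) → r' = -((n : ℂ) - 1) - 2*(j : ℂ) → i < j := by
    intro i j h1 h2
    by_contra h
    exact hL ⟨i, j, by omega, h1, h2⟩
  constructor
  · -- finrank = 1
    have hspan : diagFamSub n r r'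
        = Submodule.span ℂ {fun q₁ q₂ => St13.fF n r r' q₁ * St13.fF n r r' q₂} := by
      apply le_antisymm
      · intro s hs
        rw [Submodule.mem_span_singleton]
        refine ⟨s (St13.pF n r) (St13.pF n r), ?_⟩
        funext q₁ q₂
        simp only [Pi.smul_apply, smul_eq_mul]
        exact (St13.rep hij hs q₁ q₂).symm
      · rw [Submodule.span_le, Set.singleton_subset_iff]
        exact St13.s0_mem
    rw [hspan]
    apply finrank_span_singleton
    intro h0
    have h1 : St13.fF n r r' (St13.pF n r) * St13.fF n r r' (St13.pF n r) = 0 :=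
      congrFun (congrFun h0 (St13.pF n r)) (St13.pF n r)
    rw [St13.f_pF] at h1
    norm_num at h1
  · intro s hs hs0
    have hrep := St13.rep hij hs
    have hv : s (St13.pF n r) (St13.pF n r) ≠ 0 := by
      intro h0
      apply hs0
      funext q₁ q₂
      show s q₁ q₂ = 0
      rw [hrep q₁ q₂, h0, zero_mul]
    refine ⟨?_, ?_, ?_, ?_⟩
    · -- case (a)
      intro hr hr' q₁ q₂
      have hr2 : ¬∃ i : ℕ, r = -(n : ℂ) - 2*(i : ℂ) := fun ⟨i, h⟩ => hr ⟨i, h.symm⟩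
      have hr'2 : ¬∃ j : ℕ, r' = -((n : ℂ) - 1) - 2*(j : ℂ) := fun ⟨j, h⟩ => hr' ⟨j, h.symm⟩
      rw [hrep q₁ q₂]
      exact mul_ne_zero hv
        (mul_ne_zero (St13.f_ne_a hr2 hr'2 q₁) (St13.f_ne_a hr2 hr'2 q₂))
    · -- case (b)
      intro i hi hr'
      have hr'2 : ¬∃ j : ℕ, r' = -((n : ℂ) - 1) - 2*(j : ℂ) := fun ⟨j, h⟩ => hr' ⟨j, h.symm⟩
      constructor
      · intro q₁ q₂ hq
        rw [hrep q₁ q₂]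
        rcases hq with h | h
        · rw [St13.fz hi q₁ h]; ring
        · rw [St13.fz hi q₂ h]; ring
      · intro q₁ q₂ h1 h2
        rw [hrep q₁ q₂]
        exact mul_ne_zero hv (mul_ne_zero ((St13.f_iff_b hi hr'2 q₁).2 h1)
          ((St13.f_iff_b hi hr'2 q₂).2 h2))
    · -- case (c)
      intro hr j hj
      have hr2 : ¬∃ i : ℕ, r = -(n : ℂ) - 2*(i : ℂ) := fun ⟨i, h⟩ => hr ⟨i, h.symm⟩
      constructor
      · intro q₁ q₂ h1 h2
        rw [hrep q₁ q₂]
        exact mul_ne_zero hv (mul_ne_zero ((St13.f_iff_c hr2 hj q₁).2 h1)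
          ((St13.f_iff_c hr2 hj q₂).2 h2))
      · intro q₁ q₂ hq
        rw [hrep q₁ q₂]
        rcases hq with h | h
        · have hz : St13.fF n r r' q₁ = 0 := by
            by_contra hc
            exact absurd ((St13.f_iff_c hr2 hj q₁).1 hc) (by omega)
          rw [hz]; ring
        · have hz : St13.fF n r r' q₂ = 0 := by
            by_contra hc
            exact absurd ((St13.f_iff_c hr2 hj q₂).1 hc) (by omega)
          rw [hz]; ring
    · -- case (d)
      intro i j hi hj hij2
      constructor
      · intro q₁ q₂ a b c d
        rw [hrep q₁ q₂]
        exact mul_ne_zero hv (mul_ne_zero ((St13.f_iff_d hi hj hij2 q₁).2 ⟨a, b⟩)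
          ((St13.f_iff_d hi hj hij2 q₂).2 ⟨c, d⟩))
      · intro q₁ q₂ hq
        rw [hrep q₁ q₂]
        by_cases h1 : St13.fF n r r' q₁ = 0
        · rw [h1]; ring
        · by_cases h2 : St13.fF n r r' q₂ = 0
          · rw [h2]; ring
          · exfalso
            obtain ⟨a, b⟩ := (St13.f_iff_d hi hj hij2 q₁).1 h1
            obtain ⟨c, d⟩ := (St13.f_iff_d hi hj hij2 q₂).1 h2
            exact hq ⟨a, b, c, d⟩


end
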